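/- Under the hypotheses of the weighted scheme for the hyperbolic system with σ ≥ 1/2, the following discrete energy identity holds: (cuⁿ⁺¹,uⁿ⁺¹) − (cuⁿ,uⁿ) + νΣα[(k⁻¹qαⁿ⁺¹,qαⁿ⁺¹) − (k⁻¹qαⁿ,qαⁿ)] + (2σ−1)τ²(c(uⁿ⁺¹−uⁿ)/τ,(uⁿ⁺¹−uⁿ)/τ) + (2σ−1)τ²νΣα(k⁻¹(qαⁿ⁺¹−qαⁿ)/τ,(qαⁿ⁺¹−qαⁿ)/τ) + 2τΣα(k⁻¹qα^{σ(n)},qα^{σ(n)}) = 2τ(fⁿ⁺¹ᐟ², u^{σ(n)}). -/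

import Mathlib

open scoped RealInnerProductSpace

lemma key8 {H : Type*} [NormedAddCommGroup H] [InnerProductSpace ℝ H]
    (B : H →ₗ[ℝ] H) (hB : ∀ x y : H, ⟪B x, y⟫ = ⟪x, B y⟫) (σ : ℝ) (x y : H) :
    2 * ⟪B (x - y), σ • x + (1-σ) • y⟫
      = ⟪B x, x⟫ - ⟪B y, y⟫ + (2*σ-1) * ⟪B (x - y), x - y⟫ := by
  have h : ⟪B x, y⟫ = ⟪B y, x⟫ := by rw [hB, real_inner_comm]
  simp only [map_sub, inner_sub_left, inner_sub_right, inner_add_right,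
    real_inner_smul_right]
  rw [h]; ring

/-- discrete energy identity for the weighted scheme for the hyperbolic
system (obtained by testing the flux equations with `2τk⁻¹qα^{σ(n)}` and the
temperature equation with `2τu^{σ(n)}`). -/
theorem stmt8 {H H₁ H₂ : Type*}
    [NormedAddCommGroup H] [InnerProductSpace ℝ H] [FiniteDimensional ℝ H]
    [NormedAddCommGroup H₁] [InnerProductSpace ℝ H₁] [FiniteDimensional ℝ H₁]
    [NormedAddCommGroup H₂] [InnerProductSpace ℝ H₂] [FiniteDimensional ℝ H₂]
    (A₁ : H →ₗ[ℝ] H₁) (A₂ : H →ₗ[ℝ] H₂)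
    (c : H →ₗ[ℝ] H) (k₁op kinv₁ : H₁ →ₗ[ℝ] H₁) (k₂op kinv₂ : H₂ →ₗ[ℝ] H₂)
    (hcsym : ∀ x y : H, ⟪c x, y⟫ = ⟪x, c y⟫)
    (hk₁sym : ∀ x y : H₁, ⟪k₁op x, y⟫ = ⟪x, k₁op y⟫)
    (hk₂sym : ∀ x y : H₂, ⟪k₂op x, y⟫ = ⟪x, k₂op y⟫)
    (c₀ : ℝ) (hc₀ : 0 < c₀)
    (hc : ∀ x : H, c₀ * ‖x‖^2 ≤ ⟪c x, x⟫)
    (hk₁pos : ∀ x : H₁, x ≠ 0 → 0 < ⟪k₁op x, x⟫)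
    (hk₂pos : ∀ x : H₂, x ≠ 0 → 0 < ⟪k₂op x, x⟫)
    (hkinv₁ : ∀ x : H₁, k₁op (kinv₁ x) = x) (hkinv₁' : ∀ x : H₁, kinv₁ (k₁op x) = x)
    (hkinv₂ : ∀ x : H₂, k₂op (kinv₂ x) = x) (hkinv₂' : ∀ x : H₂, kinv₂ (k₂op x) = x)
    (ν τ σ : ℝ) (hν : 0 < ν) (hτ : 0 < τ) (hσ : 1/2 ≤ σ)
    (u : ℕ → H) (q₁ : ℕ → H₁) (q₂ : ℕ → H₂) (f : ℕ → H)
    (hflux₁ : ∀ n : ℕ,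
      (σ • q₁ (n+1) + (1-σ) • q₁ n) + (ν/τ) • (q₁ (n+1) - q₁ n)
        + k₁op (A₁ (σ • u (n+1) + (1-σ) • u n)) = 0)
    (hflux₂ : ∀ n : ℕ,
      (σ • q₂ (n+1) + (1-σ) • q₂ n) + (ν/τ) • (q₂ (n+1) - q₂ n)
        + k₂op (A₂ (σ • u (n+1) + (1-σ) • u n)) = 0)
    (hbalance : ∀ n : ℕ,
      (1/τ) • c (u (n+1) - u n)
        - (LinearMap.adjoint A₁ (σ • q₁ (n+1) + (1-σ) • q₁ n)
           + LinearMap.adjoint A₂ (σ • q₂ (n+1) + (1-σ) • q₂ n)) = f n) :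
    ∀ n : ℕ,
      ⟪c (u (n+1)), u (n+1)⟫ - ⟪c (u n), u n⟫
      + ν * ((⟪kinv₁ (q₁ (n+1)), q₁ (n+1)⟫ - ⟪kinv₁ (q₁ n), q₁ n⟫)
           + (⟪kinv₂ (q₂ (n+1)), q₂ (n+1)⟫ - ⟪kinv₂ (q₂ n), q₂ n⟫))
      + (2*σ-1) * τ^2 * ⟪c ((1/τ) • (u (n+1) - u n)), (1/τ) • (u (n+1) - u n)⟫
      + (2*σ-1) * τ^2 * ν *
          (⟪kinv₁ ((1/τ) • (q₁ (n+1) - q₁ n)), (1/τ) • (q₁ (n+1) - q₁ n)⟫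
           + ⟪kinv₂ ((1/τ) • (q₂ (n+1) - q₂ n)), (1/τ) • (q₂ (n+1) - q₂ n)⟫)
      + 2 * τ * (⟪kinv₁ (σ • q₁ (n+1) + (1-σ) • q₁ n), σ • q₁ (n+1) + (1-σ) • q₁ n⟫
           + ⟪kinv₂ (σ • q₂ (n+1) + (1-σ) • q₂ n), σ • q₂ (n+1) + (1-σ) • q₂ n⟫)
      = 2 * τ * ⟪f n, σ • u (n+1) + (1-σ) • u n⟫ := by
  intro n
  have hτ0 : τ ≠ 0 := ne_of_gt hτ
  have hkis₁ : ∀ x y : H₁, ⟪kinv₁ x, y⟫ = ⟪x, kinv₁ y⟫ := by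
    intro x y
    calc ⟪kinv₁ x, y⟫ = ⟪kinv₁ x, k₁op (kinv₁ y)⟫ := by rw [hkinv₁]
      _ = ⟪k₁op (kinv₁ x), kinv₁ y⟫ := (hk₁sym _ _).symm
      _ = ⟪x, kinv₁ y⟫ := by rw [hkinv₁]
  have hkis₂ : ∀ x y : H₂, ⟪kinv₂ x, y⟫ = ⟪x, kinv₂ y⟫ := by
    intro x y
    calc ⟪kinv₂ x, y⟫ = ⟪kinv₂ x, k₂op (kinv₂ y)⟫ := by rw [hkinv₂]
      _ = ⟪k₂op (kinv₂ x), kinv₂ y⟫ := (hk₂sym _ _).symm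
      _ = ⟪x, kinv₂ y⟫ := by rw [hkinv₂]
  -- tested flux equation 1
  have E₁ : ⟪kinv₁ (σ • q₁ (n+1) + (1-σ) • q₁ n), σ • q₁ (n+1) + (1-σ) • q₁ n⟫
      + (ν/τ) * ⟪kinv₁ (q₁ (n+1) - q₁ n), σ • q₁ (n+1) + (1-σ) • q₁ n⟫
      + ⟪A₁ (σ • u (n+1) + (1-σ) • u n), σ • q₁ (n+1) + (1-σ) • q₁ n⟫ = 0 := by
    have h : ⟪kinv₁ (σ • q₁ (n+1) + (1-σ) • q₁ n),
        (σ • q₁ (n+1) + (1-σ) • q₁ n) + (ν/τ) • (q₁ (n+1) - q₁ n)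
          + k₁op (A₁ (σ • u (n+1) + (1-σ) • u n))⟫ = 0 := by
      rw [hflux₁ n, inner_zero_right]
    rw [inner_add_right, inner_add_right, real_inner_smul_right,
      hkis₁ _ (k₁op (A₁ (σ • u (n+1) + (1-σ) • u n))), hkinv₁',
      real_inner_comm (A₁ (σ • u (n+1) + (1-σ) • u n)) _,
      hkis₁ _ ((q₁ (n+1) - q₁ n)),
      real_inner_comm (kinv₁ (q₁ (n+1) - q₁ n)) _] at h
    exact h
  -- tested flux equation 2
  have E₂ : ⟪kinv₂ (σ • q₂ (n+1) + (1-σ) • q₂ n), σ • q₂ (n+1) + (1-σ) • q₂ n⟫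
      + (ν/τ) * ⟪kinv₂ (q₂ (n+1) - q₂ n), σ • q₂ (n+1) + (1-σ) • q₂ n⟫
      + ⟪A₂ (σ • u (n+1) + (1-σ) • u n), σ • q₂ (n+1) + (1-σ) • q₂ n⟫ = 0 := by
    have h : ⟪kinv₂ (σ • q₂ (n+1) + (1-σ) • q₂ n),
        (σ • q₂ (n+1) + (1-σ) • q₂ n) + (ν/τ) • (q₂ (n+1) - q₂ n)
          + k₂op (A₂ (σ • u (n+1) + (1-σ) • u n))⟫ = 0 := by
      rw [hflux₂ n, inner_zero_right]
    rw [inner_add_right, inner_add_right, real_inner_smul_right,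
      hkis₂ _ (k₂op (A₂ (σ • u (n+1) + (1-σ) • u n))), hkinv₂',
      real_inner_comm (A₂ (σ • u (n+1) + (1-σ) • u n)) _,
      hkis₂ _ ((q₂ (n+1) - q₂ n)),
      real_inner_comm (kinv₂ (q₂ (n+1) - q₂ n)) _] at h
    exact h
  -- tested balance equation
  have b₁ : ⟪A₁ (σ • u (n+1) + (1-σ) • u n), σ • q₁ (n+1) + (1-σ) • q₁ n⟫
      = σ * ⟪q₁ (n+1), A₁ (σ • u (n+1) + (1-σ) • u n)⟫
        + (1-σ) * ⟪q₁ n, A₁ (σ • u (n+1) + (1-σ) • u n)⟫ := by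
    rw [inner_add_right, real_inner_smul_right, real_inner_smul_right,
      real_inner_comm (q₁ (n+1)) _, real_inner_comm (q₁ n) _]
  have b₂ : ⟪A₂ (σ • u (n+1) + (1-σ) • u n), σ • q₂ (n+1) + (1-σ) • q₂ n⟫
      = σ * ⟪q₂ (n+1), A₂ (σ • u (n+1) + (1-σ) • u n)⟫
        + (1-σ) * ⟪q₂ n, A₂ (σ • u (n+1) + (1-σ) • u n)⟫ := by
    rw [inner_add_right, real_inner_smul_right, real_inner_smul_right,
      real_inner_comm (q₂ (n+1)) _, real_inner_comm (q₂ n) _]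
  have E₃ : (1/τ) * ⟪c (u (n+1) - u n), σ • u (n+1) + (1-σ) • u n⟫
      - (⟪A₁ (σ • u (n+1) + (1-σ) • u n), σ • q₁ (n+1) + (1-σ) • q₁ n⟫
        + ⟪A₂ (σ • u (n+1) + (1-σ) • u n), σ • q₂ (n+1) + (1-σ) • q₂ n⟫)
      = ⟪f n, σ • u (n+1) + (1-σ) • u n⟫ := by
    have h := congrArg (fun z : H => ⟪z, σ • u (n+1) + (1-σ) • u n⟫) (hbalance n)
    simp only [inner_sub_left, inner_add_left, real_inner_smul_left,
      LinearMap.adjoint_inner_left] at h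
    rw [b₁, b₂]
    exact h
  -- energy identities
  have K_c := key8 c hcsym σ (u (n+1)) (u n)
  have K₁ := key8 kinv₁ hkis₁ σ (q₁ (n+1)) (q₁ n)
  have K₂ := key8 kinv₂ hkis₂ σ (q₂ (n+1)) (q₂ n)
  -- bridges for the scaled difference quotients
  have e_c : (2*σ-1) * τ^2 * ⟪c ((1/τ) • (u (n+1) - u n)), (1/τ) • (u (n+1) - u n)⟫
      = (2*σ-1) * ⟪c (u (n+1) - u n), u (n+1) - u n⟫ := by
    rw [map_smul, real_inner_smul_left, real_inner_smul_right]
    field_simp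
  have e_k : (2*σ-1) * τ^2 * ν *
        (⟪kinv₁ ((1/τ) • (q₁ (n+1) - q₁ n)), (1/τ) • (q₁ (n+1) - q₁ n)⟫
         + ⟪kinv₂ ((1/τ) • (q₂ (n+1) - q₂ n)), (1/τ) • (q₂ (n+1) - q₂ n)⟫)
      = (2*σ-1) * ν * (⟪kinv₁ (q₁ (n+1) - q₁ n), q₁ (n+1) - q₁ n⟫
         + ⟪kinv₂ (q₂ (n+1) - q₂ n), q₂ (n+1) - q₂ n⟫) := by
    rw [map_smul, map_smul, real_inner_smul_left, real_inner_smul_left,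
      real_inner_smul_right, real_inner_smul_right]
    field_simp
  have hcan : τ * (ν/τ) = ν := by field_simp
  have hcan2 : τ * (1/τ) = 1 := by field_simp
  have F₁ : τ * ⟪kinv₁ (σ • q₁ (n+1) + (1-σ) • q₁ n), σ • q₁ (n+1) + (1-σ) • q₁ n⟫
      + ν * ⟪kinv₁ (q₁ (n+1) - q₁ n), σ • q₁ (n+1) + (1-σ) • q₁ n⟫
      + τ * ⟪A₁ (σ • u (n+1) + (1-σ) • u n), σ • q₁ (n+1) + (1-σ) • q₁ n⟫ = 0 := by
    linear_combination τ * E₁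
      - ⟪kinv₁ (q₁ (n+1) - q₁ n), σ • q₁ (n+1) + (1-σ) • q₁ n⟫ * hcan
  have F₂ : τ * ⟪kinv₂ (σ • q₂ (n+1) + (1-σ) • q₂ n), σ • q₂ (n+1) + (1-σ) • q₂ n⟫
      + ν * ⟪kinv₂ (q₂ (n+1) - q₂ n), σ • q₂ (n+1) + (1-σ) • q₂ n⟫
      + τ * ⟪A₂ (σ • u (n+1) + (1-σ) • u n), σ • q₂ (n+1) + (1-σ) • q₂ n⟫ = 0 := by
    linear_combination τ * E₂
      - ⟪kinv₂ (q₂ (n+1) - q₂ n), σ • q₂ (n+1) + (1-σ) • q₂ n⟫ * hcan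
  have G₃ : ⟪c (u (n+1) - u n), σ • u (n+1) + (1-σ) • u n⟫
      - τ * (⟪A₁ (σ • u (n+1) + (1-σ) • u n), σ • q₁ (n+1) + (1-σ) • q₁ n⟫
        + ⟪A₂ (σ • u (n+1) + (1-σ) • u n), σ • q₂ (n+1) + (1-σ) • q₂ n⟫)
      = τ * ⟪f n, σ • u (n+1) + (1-σ) • u n⟫ := by
    linear_combination τ * E₃
      - ⟪c (u (n+1) - u n), σ • u (n+1) + (1-σ) • u n⟫ * hcan2
  rw [e_c, e_k]
  linear_combination (-1) * K_c - ν * K₁ - ν * K₂ + 2 * F₁ + 2 * F₂ + 2 * G₃
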